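/- In a block graph G equipped with a block-elimination ordering α = (v_1,...,v_n): if B and B' are two blocks of G with v_i ∈ V(B) ∩ V(B'), then F(u) = v_i for all u ∈ V(B) \ {v_i}, or F(u) = v_i for all u ∈ V(B') \ {v_i}, where F(v_j) is the neighbor of v_j of maximum index in α. -/

import Mathlib

open SimpleGraph

/-- A graph is a block graph iff the vertices of every cycle form a clique
(equivalently, every block is a clique). -/
def IsBlockGraph {V : Type*} (G : SimpleGraph V) : Prop :=
  ∀ (u : V) (c : G.Walk u u), c.IsCycle → G.IsClique {v | v ∈ c.support}

/-- A block of a block graph, i.e. a maximal clique. -/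
def IsBlock {V : Type*} (G : SimpleGraph V) (B : Set V) : Prop :=
  G.IsClique B ∧ ∀ C : Set V, G.IsClique C → B ⊆ C → B = C

lemma adj_of_c4 {V : Type*} {G : SimpleGraph V} (hBG : IsBlockGraph G)
    {a b c d : V}
    (hab : G.Adj a b) (hbc : G.Adj b c) (hcd : G.Adj c d) (hda : G.Adj d a)
    (hac : a ≠ c) (hbd : b ≠ d) : G.Adj a c := by
  have hcyc : (Walk.cons hab (Walk.cons hbc (Walk.cons hcd (Walk.cons hda Walk.nil)))).IsCycle := by
    rw [Walk.isCycle_def]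
    refine ⟨?_, by simp, ?_⟩
    · simp [Walk.isTrail_def, List.nodup_cons, Sym2.eq_iff, hab.ne, hbc.ne, hcd.ne, hda.ne,
        hac, hbd, hac.symm, hbd.symm, hab.ne', hbc.ne', hcd.ne', hda.ne']
    · simp [List.nodup_cons, hbc.ne, hbd, hcd.ne, hda.ne', hac.symm, hbd.symm, hda.ne,
        hcd.ne', hab.ne']
  have := hBG a _ hcyc
  exact this (by simp) (by simp) hac

lemma adj_of_c5 {V : Type*} {G : SimpleGraph V} (hBG : IsBlockGraph G)
    {a b c d e : V}
    (hab : G.Adj a b) (hbc : G.Adj b c) (hcd : G.Adj c d) (hde : G.Adj d e) (hea : G.Adj e a)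
    (hac : a ≠ c) (had : a ≠ d) (hbd : b ≠ d) (hbe : b ≠ e) (hce : c ≠ e) : G.Adj a c := by
  have hcyc : (Walk.cons hab (Walk.cons hbc (Walk.cons hcd (Walk.cons hde
      (Walk.cons hea Walk.nil))))).IsCycle := by
    rw [Walk.isCycle_def]
    refine ⟨?_, by simp, ?_⟩
    · simp [Walk.isTrail_def, List.nodup_cons, Sym2.eq_iff, hab.ne, hbc.ne, hcd.ne, hde.ne,
        hea.ne, hac, had, hbd, hbe, hce, hac.symm, had.symm, hbd.symm, hbe.symm, hce.symm,
        hab.ne', hbc.ne', hcd.ne', hde.ne', hea.ne']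
    · simp [List.nodup_cons, hbc.ne, hbd, hbe, hcd.ne, hce, hde.ne, hea.ne', hac.symm,
        had.symm, hbd.symm, hbe.symm, hce.symm, hab.ne', hcd.ne', hde.ne', hea.ne]
  have := hBG a _ hcyc
  exact this (by simp) (by simp) hac

/-- In a block graph equipped with a block-elimination ordering
(`v_1, …, v_n` identified with `Fin (n+1)` in order), if `B` and `B'` are two distinct
blocks with `v ∈ B ∩ B'`, then every `u ∈ B \ {v}` has `v` as its highest-indexed
neighbor (`F(u) = v`), or every `u ∈ B' \ {v}` does. -/
theorem blockGraph_BEO_maxNeighbor {n : ℕ} (G : SimpleGraph (Fin (n + 1)))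
    (hconn : G.Connected) (hBG : IsBlockGraph G)
    (hBEO : ∀ i j k : Fin (n + 1), i < j → j < k → G.Adj i j → G.Adj i k → G.Adj j k)
    (B B' : Set (Fin (n + 1))) (hB : IsBlock G B) (hB' : IsBlock G B') (hne : B ≠ B')
    (v : Fin (n + 1)) (hv : v ∈ B ∩ B') :
    (∀ u ∈ B, u ≠ v → G.Adj u v ∧ ∀ w, G.Adj u w → w ≤ v) ∨
    (∀ u ∈ B', u ≠ v → G.Adj u v ∧ ∀ w, G.Adj u w → w ≤ v) := by
  obtain ⟨hvB, hvB'⟩ := hv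
  have hClB : G.IsClique B := hB.1
  have hClB' : G.IsClique B' := hB'.1
  -- B ∩ B' = {v}
  have hinter : ∀ z, z ∈ B → z ∈ B' → z = v := by
    intro z hzB hzB'
    by_contra hzv
    obtain ⟨x, hxB, hxB'⟩ : ∃ x ∈ B, x ∉ B' := by
      by_contra h
      push_neg at h
      exact hne (hB.2 B' hClB' h)
    have hxv : x ≠ v := fun h => hxB' (h ▸ hvB')
    have hxz : x ≠ z := fun h => hxB' (h ▸ hzB')
    have hnc : ¬ G.IsClique (insert x B') := by
      intro h
      exact hxB' (by
        have h2 := hB'.2 (insert x B') h (Set.subset_insert x B')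
        rw [h2]; exact Set.mem_insert x B')
    simp only [SimpleGraph.isClique_iff, Set.Pairwise] at hnc
    push_neg at hnc
    obtain ⟨p, hp, q, hq, hpq, hnadj⟩ := hnc
    obtain ⟨y, hyB', hyx, hnxy⟩ : ∃ y ∈ B', y ≠ x ∧ ¬ G.Adj x y := by
      rcases Set.mem_insert_iff.1 hp with hpx | hpB'
      · rcases Set.mem_insert_iff.1 hq with hqx | hqB'
        · exact absurd (hpx.trans hqx.symm) hpq
        · subst hpx
          exact ⟨q, hqB', Ne.symm hpq, hnadj⟩
      · rcases Set.mem_insert_iff.1 hq with hqx | hqB'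
        · subst hqx
          exact ⟨p, hpB', hpq, fun h => hnadj h.symm⟩
        · exact absurd (hClB' hpB' hqB' hpq) hnadj
    have hyv : y ≠ v := fun h => hnxy (h ▸ (hClB hxB hvB hxv))
    have hyz : y ≠ z := fun h => hnxy (h ▸ (hClB hxB hzB hxz))
    exact hnxy (adj_of_c4 hBG (hClB hxB hvB hxv) (hClB' hvB' hyB' (Ne.symm hyv))
      (hClB' hyB' hzB' hyz) ((hClB hxB hzB hxz).symm) (Ne.symm hyx) (Ne.symm hzv))
  -- no edge between B \ {v} and B' \ {v}
  have noedge : ∀ p ∈ B, p ≠ v → ∀ q ∈ B', q ≠ v → ¬ G.Adj p q := by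
    intro p hpB hpv q hqB' hqv hadjpq
    have hqB : q ∉ B := fun h => hqv (hinter q h hqB')
    have hclq : G.IsClique (insert q B) := by
      rw [SimpleGraph.isClique_iff, @Set.pairwise_insert_of_symmetric _ _ _ _ G.symm]
      refine ⟨hClB, ?_⟩
      intro b hbB hqb
      by_cases hbv : b = v
      · subst hbv; exact hClB' hqB' hvB' hqv
      by_cases hbp : b = p
      · subst hbp; exact hadjpq.symm
      · have hbq : b ≠ q := fun h => hqB (h ▸ hbB)
        exact (adj_of_c4 hBG (hClB hbB hpB hbp) hadjpq (hClB' hqB' hvB' hqv)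
          ((hClB hbB hvB hbv).symm) hbq hpv).symm
    have h2 := hB.2 (insert q B) hclq (Set.subset_insert q B)
    exact hqB (h2 ▸ Set.mem_insert q B)
  by_contra hcon
  push_neg at hcon
  obtain ⟨⟨u, huB, hune, hu⟩, ⟨u', hu'B', hu'ne, hu'⟩⟩ := hcon
  have hadj_uv : G.Adj u v := hClB huB hvB hune
  have hadj_u'v : G.Adj u' v := hClB' hu'B' hvB' hu'ne
  obtain ⟨w, huw, hvw⟩ := hu hadj_uv
  obtain ⟨w', hu'w', hvw'⟩ := hu' hadj_u'v
  have huu' : u ≠ u' := fun h => hune (hinter u huB (h ▸ hu'B'))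
  have hnadj_uu' : ¬ G.Adj u u' := noedge u huB hune u' hu'B' hu'ne
  rcases lt_or_gt_of_ne hune with huv | hvu
  · -- u < v
    have hadj_vw : G.Adj v w := hBEO u v w huv hvw hadj_uv huw
    rcases lt_or_gt_of_ne hu'ne with hu'v | hvu'
    · -- u' < v : both below v
      have hadj_vw' : G.Adj v w' := hBEO u' v w' hu'v hvw' hadj_u'v hu'w'
      by_cases hww' : w = w'
      · subst hww'
        exact hnadj_uu' (adj_of_c4 hBG hadj_uv hadj_u'v.symm hu'w' huw.symm
          huu' hvw.ne)
      · have hadj_ww' : G.Adj w w' := by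
          rcases lt_or_gt_of_ne hww' with h | h
          · exact hBEO v w w' hvw h hadj_vw hadj_vw'
          · exact (hBEO v w' w hvw' h hadj_vw' hadj_vw).symm
        exact hnadj_uu' (adj_of_c5 hBG hadj_uv hadj_u'v.symm hu'w' hadj_ww'.symm huw.symm
          huu' (huv.trans hvw').ne hvw'.ne hvw.ne (hu'v.trans hvw).ne)
    · -- v < u' : mixed
      by_cases hwu' : w = u'
      · exact hnadj_uu' (hwu' ▸ huw)
      · have hadj_u'w : G.Adj u' w := by
          rcases lt_or_gt_of_ne (Ne.symm hwu') with h | h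
          · exact hBEO v u' w hvu' h hadj_u'v.symm hadj_vw
          · exact (hBEO v w u' hvw h hadj_vw hadj_u'v.symm).symm
        exact hnadj_uu' (adj_of_c4 hBG hadj_uv hadj_u'v.symm hadj_u'w huw.symm
          huu' hvw.ne)
  · -- v < u
    rcases lt_or_gt_of_ne hu'ne with hu'v | hvu'
    · -- u' < v : mixed (symmetric)
      have hadj_vw' : G.Adj v w' := hBEO u' v w' hu'v hvw' hadj_u'v hu'w'
      by_cases hw'u : w' = u
      · exact hnadj_uu' (hw'u ▸ hu'w').symm
      · have hadj_uw' : G.Adj u w' := by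
          rcases lt_or_gt_of_ne (Ne.symm hw'u) with h | h
          · exact hBEO v u w' hvu h hadj_uv.symm hadj_vw'
          · exact (hBEO v w' u hvw' h hadj_vw' hadj_uv.symm).symm
        exact hnadj_uu' (adj_of_c4 hBG hadj_u'v hadj_uv.symm hadj_uw' hu'w'.symm
          (Ne.symm huu') hvw'.ne).symm
    · -- v < u and v < u' : both above v
      rcases lt_or_gt_of_ne huu' with h | h
      · exact hnadj_uu' (hBEO v u u' hvu h hadj_uv.symm hadj_u'v.symm)
      · exact hnadj_uu' (hBEO v u' u hvu' h hadj_u'v.symm hadj_uv.symm).symm
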